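/- Let k ≥ 2 and m ≥ k + 1. The function λ ↦ σ_k(λ)/σ_{k−1}(λ) on ℝ^m_+, where σ_j denotes the j-th elementary symmetric polynomial in m variables, is strictly inverse-concave. -/

import Mathlib

noncomputable section

/-- The positive cone `ℝ^m_+`. -/
def posConeP (m : ℕ) : Set (Fin m → ℝ) := {x | ∀ i, 0 < x i}

/-- `f` is strictly inverse-concave: `λ ↦ -f(λ₁⁻¹,…,λ_m⁻¹)` is strictly concave on `ℝ^m_+`. -/
def StrictInvConcave (m : ℕ) (f : (Fin m → ℝ) → ℝ) : Prop :=
  StrictConcaveOn ℝ (posConeP m) (fun x => - f (fun i => (x i)⁻¹))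

/-- The `k`-th elementary symmetric polynomial `σ_k(λ) = Σ_{i₁<⋯<i_k} λ_{i₁} ⋯ λ_{i_k}`. -/
def esymm (m k : ℕ) (x : Fin m → ℝ) : ℝ :=
  ∑ T ∈ Finset.powersetCard k (Finset.univ : Finset (Fin m)), ∏ i ∈ T, x i


section MLdev

open Finset

variable {ι : Type*} [DecidableEq ι]

def EE (j : ℕ) (s : Finset ι) (x : ι → ℝ) : ℝ :=
  ∑ T ∈ s.powersetCard j, ∏ i ∈ T, x i

lemma EE_zero (s : Finset ι) (x : ι → ℝ) : EE 0 s x = 1 := by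
  simp [EE]

lemma EE_erase {i : ι} {s : Finset ι} (hi : i ∈ s) (j : ℕ) (x : ι → ℝ) :
    EE (j + 1) s x = EE (j + 1) (s.erase i) x + x i * EE j (s.erase i) x := by
  classical
  conv_lhs => rw [← Finset.insert_erase hi]
  rw [EE, Finset.powersetCard_succ_insert (Finset.notMem_erase i s),
    Finset.sum_union]
  · congr 1
    rw [Finset.sum_image, EE, Finset.mul_sum]
    · apply Finset.sum_congr rfl
      intro T hT
      rw [Finset.mem_powersetCard] at hT
      rw [Finset.prod_insert]
      exact fun hiT => (Finset.notMem_erase i s) (hT.1 hiT)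
    · intro T hT U hU hTU
      rw [Finset.mem_coe, Finset.mem_powersetCard] at hT hU
      have hiT : i ∉ T := fun h => (Finset.notMem_erase i s) (hT.1 h)
      have hiU : i ∉ U := fun h => (Finset.notMem_erase i s) (hU.1 h)
      rw [← Finset.erase_insert hiT, ← Finset.erase_insert hiU, hTU]
  · rw [Finset.disjoint_left]
    intro T hT hT'
    rw [Finset.mem_powersetCard] at hT
    rw [Finset.mem_image] at hT'
    obtain ⟨U, hU, rfl⟩ := hT'
    exact (Finset.notMem_erase i s) (hT.1 (Finset.mem_insert_self i U))

lemma EE_pos {j : ℕ} {s : Finset ι} {x : ι → ℝ} (hx : ∀ i ∈ s, 0 < x i)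
    (h : j ≤ s.card) : 0 < EE j s x := by
  obtain ⟨T, hTs, hT⟩ := Finset.exists_subset_card_eq h
  apply Finset.sum_pos
  · intro U hU
    rw [Finset.mem_powersetCard] at hU
    exact Finset.prod_pos fun i hi => hx i (hU.1 hi)
  · exact ⟨T, Finset.mem_powersetCard.2 ⟨hTs, hT⟩⟩

lemma EE_nonneg {j : ℕ} {s : Finset ι} {x : ι → ℝ} (hx : ∀ i ∈ s, 0 ≤ x i) :
    0 ≤ EE j s x :=
  Finset.sum_nonneg fun U hU => Finset.prod_nonneg fun i hi =>
    hx i ((Finset.mem_powersetCard.1 hU).1 hi)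

set_option linter.unusedSectionVars false
set_option linter.unusedVariables false

lemma EE_sum_erase (j : ℕ) (s : Finset ι) (x : ι → ℝ) :
    ∑ i ∈ s, x i * EE j (s.erase i) x = (j + 1 : ℝ) * EE (j + 1) s x := by
  classical
  have lhs_eq : ∑ i ∈ s, x i * EE j (s.erase i) x
      = ∑ p ∈ s.sigma (fun i => (s.erase i).powersetCard j), ∏ a ∈ insert p.1 p.2, x a := by
    rw [Finset.sum_sigma]
    apply Finset.sum_congr rfl
    intro i hi
    rw [EE, Finset.mul_sum]
    apply Finset.sum_congr rfl
    intro T hT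
    rw [Finset.mem_powersetCard] at hT
    rw [Finset.prod_insert (fun h => (Finset.notMem_erase i s) (hT.1 h))]
  have rhs_eq : (j + 1 : ℝ) * EE (j + 1) s x
      = ∑ p ∈ (s.powersetCard (j + 1)).sigma (fun U => U), ∏ a ∈ p.1, x a := by
    rw [Finset.sum_sigma, EE, Finset.mul_sum]
    apply Finset.sum_congr rfl
    intro U hU
    rw [Finset.mem_powersetCard] at hU
    calc (j + 1 : ℝ) * ∏ i ∈ U, x i
        = ∑ _i ∈ U, ∏ a ∈ U, x a := by
          rw [Finset.sum_const, hU.2, nsmul_eq_mul]; push_cast; ring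
      _ = ∑ i ∈ U, ∏ a ∈ (⟨U, i⟩ : Σ _ : Finset ι, ι).fst, x a := rfl
  rw [lhs_eq, rhs_eq]
  apply Finset.sum_nbij' (i := fun p => ⟨insert p.1 p.2, p.1⟩)
    (j := fun p => ⟨p.2, p.1.erase p.2⟩)
  · intro p hp
    rw [Finset.mem_sigma] at hp
    obtain ⟨hi, hT⟩ := hp
    rw [Finset.mem_powersetCard] at hT
    rw [Finset.mem_sigma]
    constructor
    · rw [Finset.mem_powersetCard]
      refine ⟨Finset.insert_subset hi (hT.1.trans (Finset.erase_subset _ _)), ?_⟩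
      rw [Finset.card_insert_of_notMem (fun h => (Finset.notMem_erase p.1 s) (hT.1 h)), hT.2]
    · exact Finset.mem_insert_self _ _
  · intro p hp
    rw [Finset.mem_sigma] at hp
    obtain ⟨hU, hi⟩ := hp
    rw [Finset.mem_powersetCard] at hU
    rw [Finset.mem_sigma]
    constructor
    · exact hU.1 hi
    · rw [Finset.mem_powersetCard]
      constructor
      · exact fun a ha => Finset.mem_erase.2 ⟨(Finset.mem_erase.1 ha).1,
          hU.1 (Finset.erase_subset _ _ ha)⟩
      · rw [Finset.card_erase_of_mem hi, hU.2]; rfl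
  · intro p hp
    rw [Finset.mem_sigma] at hp
    obtain ⟨hi, hT⟩ := hp
    rw [Finset.mem_powersetCard] at hT
    have : p.1 ∉ p.2 := fun h => (Finset.notMem_erase p.1 s) (hT.1 h)
    simp [Finset.erase_insert this]
  · intro p hp
    rw [Finset.mem_sigma] at hp
    obtain ⟨hU, hi⟩ := hp
    simp [Finset.insert_erase hi]
  · intro p hp
    rfl

lemma EE_one (s : Finset ι) (x : ι → ℝ) : EE 1 s x = ∑ i ∈ s, x i := by
  have := EE_sum_erase 0 s x
  simp only [EE_zero, mul_one, Nat.cast_zero, zero_add, one_mul] at this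
  exact this.symm

lemma EE_key (k : ℕ) (s : Finset ι) (x : ι → ℝ) :
    (k + 2 : ℝ) * EE (k + 2) s x
      = (∑ i ∈ s, x i) * EE (k + 1) s x - ∑ i ∈ s, (x i) ^ 2 * EE k (s.erase i) x := by
  have h := EE_sum_erase (k + 1) s x
  have h2 : ∑ i ∈ s, x i * EE (k + 1) (s.erase i) x
      = ∑ i ∈ s, (x i * EE (k + 1) s x - (x i) ^ 2 * EE k (s.erase i) x) := by
    apply Finset.sum_congr rfl
    intro i hi
    rw [EE_erase hi k x]
    ring
  rw [h2, Finset.sum_sub_distrib, ← Finset.sum_mul] at h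
  push_cast at h ⊢
  linarith

lemma EE_smul (j : ℕ) (s : Finset ι) (x : ι → ℝ) (c : ℝ) :
    EE j s (c • x) = c ^ j * EE j s x := by
  rw [EE, EE, Finset.mul_sum]
  apply Finset.sum_congr rfl
  intro T hT
  rw [Finset.mem_powersetCard] at hT
  simp only [Pi.smul_apply, smul_eq_mul]
  rw [Finset.prod_mul_distrib, Finset.prod_const, hT.2]

lemma cs_le {a b p q : ℝ} (hp : 0 < p) (hq : 0 < q) :
    (a + b) ^ 2 / (p + q) ≤ a ^ 2 / p + b ^ 2 / q := by
  rw [div_add_div _ _ (ne_of_gt hp) (ne_of_gt hq),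
    div_le_div_iff₀ (by positivity) (by positivity)]
  nlinarith [sq_nonneg (a * q - b * p)]

lemma cs_lt {a b p q : ℝ} (hp : 0 < p) (hq : 0 < q) (hne : a * q ≠ b * p) :
    (a + b) ^ 2 / (p + q) < a ^ 2 / p + b ^ 2 / q := by
  rw [div_add_div _ _ (ne_of_gt hp) (ne_of_gt hq),
    div_lt_div_iff₀ (by positivity) (by positivity)]
  have : 0 < (a * q - b * p) ^ 2 := by
    have : a * q - b * p ≠ 0 := sub_ne_zero.2 hne
    positivity
  nlinarith [this]

lemma ratio_rep (k : ℕ) (s : Finset ι) (w : ι → ℝ) (hw : ∀ i ∈ s, 0 < w i)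
    (hcard : k + 2 ≤ s.card) :
    EE (k + 2) s w / EE (k + 1) s w
      = ((∑ i ∈ s, w i) - ∑ i ∈ s, (w i) ^ 2 * (EE k (s.erase i) w / EE (k + 1) s w))
        / (k + 2) := by
  have h1 : 0 < EE (k + 1) s w := EE_pos hw (by omega)
  have h2 : (0 : ℝ) < (k : ℝ) + 2 := by positivity
  have hC : ∑ i ∈ s, (w i) ^ 2 * (EE k (s.erase i) w / EE (k + 1) s w)
      = (∑ i ∈ s, (w i) ^ 2 * EE k (s.erase i) w) / EE (k + 1) s w := by
    rw [Finset.sum_div]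
    exact Finset.sum_congr rfl fun i _ => (mul_div_assoc _ _ _).symm
  rw [hC, div_eq_div_iff h1.ne' h2.ne', sub_mul, div_mul_cancel₀ _ h1.ne']
  have := EE_key k s w
  push_cast at this ⊢
  linarith

/-- `1/D = EE (k+1) s w / EE k (s.erase i) w` decomposition. -/
lemma P_eq (k : ℕ) {s : Finset ι} {i : ι} (hi : i ∈ s) (w : ι → ℝ)
    (hw : ∀ j ∈ s, 0 < w j) (hcard : k + 2 ≤ s.card) :
    EE (k + 1) s w / EE k (s.erase i) w
      = EE (k + 1) (s.erase i) w / EE k (s.erase i) w + w i := by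
  have hek : 0 < EE k (s.erase i) w := by
    apply EE_pos (fun j hj => hw j (Finset.mem_of_mem_erase hj))
    rw [Finset.card_erase_of_mem hi]; omega
  rw [EE_erase hi k w, add_div, mul_div_assoc, div_self hek.ne', mul_one]

lemma term_eq (k : ℕ) {s : Finset ι} {i : ι} (hi : i ∈ s) (w : ι → ℝ)
    (hw : ∀ j ∈ s, 0 < w j) (hcard : k + 2 ≤ s.card) :
    (w i) ^ 2 * (EE k (s.erase i) w / EE (k + 1) s w)
      = (w i) ^ 2 / (EE (k + 1) s w / EE k (s.erase i) w) := by
  have hek : 0 < EE k (s.erase i) w := by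
    apply EE_pos (fun j hj => hw j (Finset.mem_of_mem_erase hj))
    rw [Finset.card_erase_of_mem hi]; omega
  have h1 : 0 < EE (k + 1) s w := EE_pos hw (by omega)
  rw [div_div_eq_mul_div, mul_comm ((w i)^2), mul_div_assoc, mul_comm]

lemma P_pos (k : ℕ) {s : Finset ι} {i : ι} (hi : i ∈ s) (w : ι → ℝ)
    (hw : ∀ j ∈ s, 0 < w j) (hcard : k + 2 ≤ s.card) :
    0 < EE (k + 1) s w / EE k (s.erase i) w := by
  have hek : 0 < EE k (s.erase i) w := by
    apply EE_pos (fun j hj => hw j (Finset.mem_of_mem_erase hj))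
    rw [Finset.card_erase_of_mem hi]; omega
  exact div_pos (EE_pos hw (by omega)) hek

lemma per_chain (k : ℕ) {s : Finset ι} {i : ι} (hi : i ∈ s) (x y : ι → ℝ)
    (hx : ∀ j ∈ s, 0 < x j) (hy : ∀ j ∈ s, 0 < y j) (hcard : k + 2 ≤ s.card)
    (hIH : EE (k + 1) (s.erase i) x / EE k (s.erase i) x
         + EE (k + 1) (s.erase i) y / EE k (s.erase i) y
         ≤ EE (k + 1) (s.erase i) (x + y) / EE k (s.erase i) (x + y)) :
    ((x + y) i) ^ 2 * (EE k (s.erase i) (x + y) / EE (k + 1) s (x + y))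
      ≤ (x i) ^ 2 * (EE k (s.erase i) x / EE (k + 1) s x)
        + (y i) ^ 2 * (EE k (s.erase i) y / EE (k + 1) s y) := by
  have hz : ∀ j ∈ s, 0 < (x + y) j := fun j hj => add_pos (hx j hj) (hy j hj)
  have hpx := P_pos k hi x hx hcard
  have hpy := P_pos k hi y hy hcard
  have hpz := P_pos k hi (x + y) hz hcard
  have hP : EE (k + 1) s x / EE k (s.erase i) x + EE (k + 1) s y / EE k (s.erase i) y
      ≤ EE (k + 1) s (x + y) / EE k (s.erase i) (x + y) := by
    rw [P_eq k hi x hx hcard, P_eq k hi y hy hcard, P_eq k hi (x + y) hz hcard]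
    have : (x + y) i = x i + y i := rfl
    rw [this]
    linarith
  rw [term_eq k hi x hx hcard, term_eq k hi y hy hcard, term_eq k hi (x + y) hz hcard]
  have hzi : (x + y) i = x i + y i := rfl
  calc ((x + y) i) ^ 2 / (EE (k + 1) s (x + y) / EE k (s.erase i) (x + y))
      ≤ ((x + y) i) ^ 2 / (EE (k + 1) s x / EE k (s.erase i) x
          + EE (k + 1) s y / EE k (s.erase i) y) := by
        apply div_le_div_of_nonneg_left (by positivity) (by linarith) hP
    _ ≤ (x i) ^ 2 / (EE (k + 1) s x / EE k (s.erase i) x)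
          + (y i) ^ 2 / (EE (k + 1) s y / EE k (s.erase i) y) := by
        rw [hzi]; exact cs_le hpx hpy

lemma ML : ∀ (k : ℕ) (s : Finset ι) (x y : ι → ℝ), (∀ i ∈ s, 0 < x i) →
    (∀ i ∈ s, 0 < y i) → k + 1 ≤ s.card →
    EE (k + 1) s x / EE k s x + EE (k + 1) s y / EE k s y
      ≤ EE (k + 1) s (x + y) / EE k s (x + y) := by
  intro k
  induction k with
  | zero =>
    intro s x y hx hy hcard
    simp only [EE_zero, div_one, zero_add]
    rw [EE_one, EE_one, EE_one, ← Finset.sum_add_distrib]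
    exact le_of_eq (Finset.sum_congr rfl fun i _ => rfl)
  | succ k IH =>
    intro s x y hx hy hcard
    have hz : ∀ j ∈ s, 0 < (x + y) j := fun j hj => add_pos (hx j hj) (hy j hj)
    rw [ratio_rep k s x hx hcard, ratio_rep k s y hy hcard, ratio_rep k s (x + y) hz hcard]
    have hsum : ∑ i ∈ s, ((x + y) i) ^ 2 * (EE k (s.erase i) (x + y) / EE (k + 1) s (x + y))
        ≤ ∑ i ∈ s, ((x i) ^ 2 * (EE k (s.erase i) x / EE (k + 1) s x)
            + (y i) ^ 2 * (EE k (s.erase i) y / EE (k + 1) s y)) := by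
      apply Finset.sum_le_sum
      intro i hi
      apply per_chain k hi x y hx hy hcard
      apply IH (s.erase i) x y (fun j hj => hx j (Finset.mem_of_mem_erase hj))
        (fun j hj => hy j (Finset.mem_of_mem_erase hj))
      rw [Finset.card_erase_of_mem hi]; omega
    rw [Finset.sum_add_distrib] at hsum
    have hS : ∑ i ∈ s, (x + y) i = ∑ i ∈ s, x i + ∑ i ∈ s, y i := by
      rw [← Finset.sum_add_distrib]
      exact Finset.sum_congr rfl fun i _ => rfl
    rw [hS, ← add_div, div_le_div_iff₀ (by positivity) (by positivity)]
    nlinarith [hsum]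

lemma per_chain_lt₁ (k : ℕ) {s : Finset ι} {i : ι} (hi : i ∈ s) (x y : ι → ℝ)
    (hx : ∀ j ∈ s, 0 < x j) (hy : ∀ j ∈ s, 0 < y j) (hcard : k + 2 ≤ s.card)
    (hIH : EE (k + 1) (s.erase i) x / EE k (s.erase i) x
         + EE (k + 1) (s.erase i) y / EE k (s.erase i) y
         < EE (k + 1) (s.erase i) (x + y) / EE k (s.erase i) (x + y)) :
    ((x + y) i) ^ 2 * (EE k (s.erase i) (x + y) / EE (k + 1) s (x + y))
      < (x i) ^ 2 * (EE k (s.erase i) x / EE (k + 1) s x)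
        + (y i) ^ 2 * (EE k (s.erase i) y / EE (k + 1) s y) := by
  have hz : ∀ j ∈ s, 0 < (x + y) j := fun j hj => add_pos (hx j hj) (hy j hj)
  have hpx := P_pos k hi x hx hcard
  have hpy := P_pos k hi y hy hcard
  have hpz := P_pos k hi (x + y) hz hcard
  have hP : EE (k + 1) s x / EE k (s.erase i) x + EE (k + 1) s y / EE k (s.erase i) y
      < EE (k + 1) s (x + y) / EE k (s.erase i) (x + y) := by
    rw [P_eq k hi x hx hcard, P_eq k hi y hy hcard, P_eq k hi (x + y) hz hcard]
    have : (x + y) i = x i + y i := rfl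
    rw [this]
    linarith
  rw [term_eq k hi x hx hcard, term_eq k hi y hy hcard, term_eq k hi (x + y) hz hcard]
  have hzi : (x + y) i = x i + y i := rfl
  have hzip : 0 < (x + y) i := hz i hi
  calc ((x + y) i) ^ 2 / (EE (k + 1) s (x + y) / EE k (s.erase i) (x + y))
      < ((x + y) i) ^ 2 / (EE (k + 1) s x / EE k (s.erase i) x
          + EE (k + 1) s y / EE k (s.erase i) y) := by
        apply div_lt_div_of_pos_left (by positivity) (by linarith) hP
    _ ≤ (x i) ^ 2 / (EE (k + 1) s x / EE k (s.erase i) x)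
          + (y i) ^ 2 / (EE (k + 1) s y / EE k (s.erase i) y) := by
        rw [hzi]; exact cs_le hpx hpy

lemma per_chain_lt₂ (k : ℕ) {s : Finset ι} {i : ι} (hi : i ∈ s) (x y : ι → ℝ)
    (hx : ∀ j ∈ s, 0 < x j) (hy : ∀ j ∈ s, 0 < y j) (hcard : k + 2 ≤ s.card)
    (hIH : EE (k + 1) (s.erase i) x / EE k (s.erase i) x
         + EE (k + 1) (s.erase i) y / EE k (s.erase i) y
         ≤ EE (k + 1) (s.erase i) (x + y) / EE k (s.erase i) (x + y))
    (hcs : x i * (EE (k + 1) s y / EE k (s.erase i) y)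
         ≠ y i * (EE (k + 1) s x / EE k (s.erase i) x)) :
    ((x + y) i) ^ 2 * (EE k (s.erase i) (x + y) / EE (k + 1) s (x + y))
      < (x i) ^ 2 * (EE k (s.erase i) x / EE (k + 1) s x)
        + (y i) ^ 2 * (EE k (s.erase i) y / EE (k + 1) s y) := by
  have hz : ∀ j ∈ s, 0 < (x + y) j := fun j hj => add_pos (hx j hj) (hy j hj)
  have hpx := P_pos k hi x hx hcard
  have hpy := P_pos k hi y hy hcard
  have hpz := P_pos k hi (x + y) hz hcard
  have hP : EE (k + 1) s x / EE k (s.erase i) x + EE (k + 1) s y / EE k (s.erase i) y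
      ≤ EE (k + 1) s (x + y) / EE k (s.erase i) (x + y) := by
    rw [P_eq k hi x hx hcard, P_eq k hi y hy hcard, P_eq k hi (x + y) hz hcard]
    have : (x + y) i = x i + y i := rfl
    rw [this]
    linarith
  rw [term_eq k hi x hx hcard, term_eq k hi y hy hcard, term_eq k hi (x + y) hz hcard]
  have hzi : (x + y) i = x i + y i := rfl
  calc ((x + y) i) ^ 2 / (EE (k + 1) s (x + y) / EE k (s.erase i) (x + y))
      ≤ ((x + y) i) ^ 2 / (EE (k + 1) s x / EE k (s.erase i) x
          + EE (k + 1) s y / EE k (s.erase i) y) := by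
        apply div_le_div_of_nonneg_left (by positivity) (by linarith) hP
    _ < (x i) ^ 2 / (EE (k + 1) s x / EE k (s.erase i) x)
          + (y i) ^ 2 / (EE (k + 1) s y / EE k (s.erase i) y) := by
        rw [hzi]; exact cs_lt hpx hpy hcs

def Par (s : Finset ι) (x y : ι → ℝ) : Prop := ∃ c : ℝ, 0 < c ∧ ∀ i ∈ s, x i = c * y i

lemma exists_erase_notPar {s : Finset ι} {x y : ι → ℝ} (hy : ∀ i ∈ s, 0 < y i)
    (h3 : 3 ≤ s.card) (hnp : ¬ Par s x y) : ∃ i ∈ s, ¬ Par (s.erase i) x y := by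
  by_contra h
  push_neg at h
  have h2 : 2 < s.card := by omega
  obtain ⟨a, b, c, ha, hb, hc, hab, hac, hbc⟩ := Finset.two_lt_card_iff.1 h2
  obtain ⟨ca, hca, hxa⟩ := h a ha
  obtain ⟨cb, hcb, hxb⟩ := h b hb
  have hcmem : c ∈ s.erase a := Finset.mem_erase.2 ⟨hac.symm, hc⟩
  have hcmem' : c ∈ s.erase b := Finset.mem_erase.2 ⟨hbc.symm, hc⟩
  have hceq : ca = cb := by
    have h1 := hxa c hcmem
    have h2 := hxb c hcmem'
    have := (hy c hc).ne'
    rw [h1] at h2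
    exact mul_right_cancel₀ this h2
  apply hnp
  refine ⟨ca, hca, fun i hi => ?_⟩
  by_cases hia : i = a
  · subst hia
    rw [hceq]
    exact hxb i (Finset.mem_erase.2 ⟨hab, hi⟩)
  · exact hxa i (Finset.mem_erase.2 ⟨hia, hi⟩)

lemma MLs : ∀ (k : ℕ) (s : Finset ι) (x y : ι → ℝ), (∀ i ∈ s, 0 < x i) →
    (∀ i ∈ s, 0 < y i) → k + 2 ≤ s.card → ¬ Par s x y →
    EE (k + 2) s x / EE (k + 1) s x + EE (k + 2) s y / EE (k + 1) s y
      < EE (k + 2) s (x + y) / EE (k + 1) s (x + y) := by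
  intro k
  induction k with
  | zero =>
    intro s x y hx hy hcard hnp
    have hz : ∀ j ∈ s, 0 < (x + y) j := fun j hj => add_pos (hx j hj) (hy j hj)
    have hSx : 0 < ∑ i ∈ s, x i := Finset.sum_pos hx (Finset.card_pos.1 (by omega))
    have hSy : 0 < ∑ i ∈ s, y i := Finset.sum_pos hy (Finset.card_pos.1 (by omega))
    -- find i with CS-strictness
    have hex : ∃ i ∈ s, x i * (∑ j ∈ s, y j) ≠ y i * (∑ j ∈ s, x j) := by
      by_contra h
      push_neg at h
      apply hnp
      refine ⟨(∑ j ∈ s, x j) / (∑ j ∈ s, y j), div_pos hSx hSy, fun i hi => ?_⟩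
      have := h i hi
      field_simp
      linarith [h i hi]
    obtain ⟨i₀, hi₀, hcs₀⟩ := hex
    rw [ratio_rep 0 s x hx hcard, ratio_rep 0 s y hy hcard, ratio_rep 0 s (x + y) hz hcard]
    have hsum : ∑ i ∈ s, ((x + y) i) ^ 2 * (EE 0 (s.erase i) (x + y) / EE 1 s (x + y))
        < ∑ i ∈ s, ((x i) ^ 2 * (EE 0 (s.erase i) x / EE 1 s x)
            + (y i) ^ 2 * (EE 0 (s.erase i) y / EE 1 s y)) := by
      apply Finset.sum_lt_sum
      · intro i hi
        apply per_chain (k := 0) hi x y hx hy hcard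
        apply ML 0 (s.erase i) x y (fun j hj => hx j (Finset.mem_of_mem_erase hj))
          (fun j hj => hy j (Finset.mem_of_mem_erase hj))
        rw [Finset.card_erase_of_mem hi]; omega
      · refine ⟨i₀, hi₀, ?_⟩
        apply per_chain_lt₂ (k := 0) hi₀ x y hx hy hcard
        · apply ML 0 (s.erase i₀) x y (fun j hj => hx j (Finset.mem_of_mem_erase hj))
            (fun j hj => hy j (Finset.mem_of_mem_erase hj))
          rw [Finset.card_erase_of_mem hi₀]; omega
        · simpa [EE_zero, EE_one] using hcs₀
    rw [Finset.sum_add_distrib] at hsum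
    have hS : ∑ i ∈ s, (x + y) i = ∑ i ∈ s, x i + ∑ i ∈ s, y i := by
      rw [← Finset.sum_add_distrib]
      exact Finset.sum_congr rfl fun i _ => rfl
    rw [hS, ← add_div, div_lt_div_iff₀ (by positivity) (by positivity)]
    nlinarith [hsum]
  | succ k IH =>
    intro s x y hx hy hcard hnp
    have hz : ∀ j ∈ s, 0 < (x + y) j := fun j hj => add_pos (hx j hj) (hy j hj)
    obtain ⟨i₀, hi₀, hnp₀⟩ := exists_erase_notPar hy (by omega) hnp
    rw [ratio_rep (k + 1) s x hx hcard, ratio_rep (k + 1) s y hy hcard,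
      ratio_rep (k + 1) s (x + y) hz hcard]
    have hsum : ∑ i ∈ s, ((x + y) i) ^ 2 * (EE (k + 1) (s.erase i) (x + y) / EE (k + 2) s (x + y))
        < ∑ i ∈ s, ((x i) ^ 2 * (EE (k + 1) (s.erase i) x / EE (k + 2) s x)
            + (y i) ^ 2 * (EE (k + 1) (s.erase i) y / EE (k + 2) s y)) := by
      apply Finset.sum_lt_sum
      · intro i hi
        apply per_chain (k + 1) hi x y hx hy hcard
        apply ML (k + 1) (s.erase i) x y (fun j hj => hx j (Finset.mem_of_mem_erase hj))
          (fun j hj => hy j (Finset.mem_of_mem_erase hj))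
        rw [Finset.card_erase_of_mem hi]; omega
      · refine ⟨i₀, hi₀, ?_⟩
        apply per_chain_lt₁ (k + 1) hi₀ x y hx hy hcard
        apply IH (s.erase i₀) x y (fun j hj => hx j (Finset.mem_of_mem_erase hj))
          (fun j hj => hy j (Finset.mem_of_mem_erase hj)) ?_ hnp₀
        rw [Finset.card_erase_of_mem hi₀]; omega
    rw [Finset.sum_add_distrib] at hsum
    have hS : ∑ i ∈ s, (x + y) i = ∑ i ∈ s, x i + ∑ i ∈ s, y i := by
      rw [← Finset.sum_add_distrib]
      exact Finset.sum_congr rfl fun i _ => rfl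
    rw [hS, ← add_div, div_lt_div_iff₀ (by positivity) (by positivity)]
    nlinarith [hsum]

lemma EE_univ_top {m : ℕ} (x : Fin m → ℝ) : EE m Finset.univ x = ∏ i, x i := by
  have hc : (Finset.univ : Finset (Fin m)).card = m := by simp
  have h := Finset.powersetCard_self (Finset.univ : Finset (Fin m))
  rw [hc] at h
  rw [EE, h, Finset.sum_singleton]

lemma EE_inv {m : ℕ} (j : ℕ) (hj : j ≤ m) (x : Fin m → ℝ) (hx : ∀ i, 0 < x i) :
    EE j Finset.univ (fun i => (x i)⁻¹)
      = EE (m - j) Finset.univ x / EE m Finset.univ x := by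
  have hm : 0 < EE m Finset.univ x := by
    apply EE_pos (fun i _ => hx i)
    simp
  rw [eq_div_iff hm.ne', EE_univ_top, EE, EE, Finset.sum_mul]
  apply Finset.sum_nbij' (i := fun T => Tᶜ) (j := fun T => Tᶜ)
  · intro T hT
    rw [Finset.mem_powersetCard] at hT ⊢
    refine ⟨Finset.subset_univ _, ?_⟩
    rw [Finset.card_compl, hT.2]
    simp
  · intro T hT
    rw [Finset.mem_powersetCard] at hT ⊢
    refine ⟨Finset.subset_univ _, ?_⟩
    rw [Finset.card_compl, hT.2]
    simp
    omega
  · intro T _; exact compl_compl T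
  · intro T _; exact compl_compl T
  · intro T hT
    have hTpos : 0 < ∏ i ∈ T, x i :=
      Finset.prod_pos fun i _ => hx i
    have hsplit : (∏ i ∈ Tᶜ, x i) * ∏ i ∈ T, x i = ∏ i, x i :=
      Finset.prod_compl_mul_prod T x
    have hinv : ∏ i ∈ T, (x i)⁻¹ = (∏ i ∈ T, x i)⁻¹ := by
      rw [← Finset.prod_inv_distrib]
    rw [hinv, ← hsplit]
    field_simp

lemma amhm_lt {p q a b : ℝ} (hp : 0 < p) (hq : 0 < q) (hpq : p ≠ q)
    (ha : 0 < a) (hb : 0 < b) (hab : a + b = 1) :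
    1 / (a * p + b * q) < a / p + b / q := by
  have hd : 0 < a * p + b * q := by positivity
  rw [div_add_div _ _ hp.ne' hq.ne', div_lt_div_iff₀ hd (by positivity)]
  have h1 : 0 < a * b := mul_pos ha hb
  have h2 : 0 < (p - q) ^ 2 := by
    have : p - q ≠ 0 := sub_ne_zero.2 hpq
    positivity
  have key : (a * q + p * b) * (a * p + b * q) = (a + b) ^ 2 * (p * q) + a * b * (p - q) ^ 2 := by
    ring
  rw [hab] at key
  nlinarith [mul_pos h1 h2, key]

lemma g_smul {m : ℕ} (l : ℕ) (hl : l + 1 ≤ m) (w : Fin m → ℝ) (hw : ∀ i, 0 < w i)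
    (c : ℝ) (hc : 0 < c) :
    EE (l + 1) Finset.univ (c • w) / EE l Finset.univ (c • w)
      = c * (EE (l + 1) Finset.univ w / EE l Finset.univ w) := by
  rw [EE_smul, EE_smul, pow_succ, mul_assoc,
    mul_div_mul_left _ _ (pow_ne_zero l hc.ne'), mul_div_assoc]


end MLdev

/-- for `k ≥ 2` and `m ≥ k + 1`, the ratio `σ_k/σ_{k-1}` is strictly
inverse-concave on `ℝ^m_+`. -/
lemma esymm_EE (m j : ℕ) (x : Fin m → ℝ) : esymm m j x = EE j Finset.univ x := rfl

theorem stmt14 (m k : ℕ) (hk : 2 ≤ k) (hm : k + 1 ≤ m) :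
    StrictInvConcave m (fun x => esymm m k x / esymm m (k - 1) x) := by
  set l := m - k with hl
  have hl1 : 1 ≤ l := by omega
  have hlm : l + 1 ≤ m := by omega
  have hcard : ∀ j : ℕ, j ≤ m → j ≤ (Finset.univ : Finset (Fin m)).card := by
    intro j hj; simpa using hj
  have key : ∀ w : Fin m → ℝ, (∀ i, 0 < w i) →
      esymm m k (fun i => (w i)⁻¹) / esymm m (k - 1) (fun i => (w i)⁻¹)
        = EE l Finset.univ w / EE (l + 1) Finset.univ w := by
    intro w hw
    have hmw : 0 < EE m Finset.univ w := EE_pos (fun i _ => hw i) (hcard m le_rfl)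
    have h1 : esymm m k (fun i => (w i)⁻¹)
        = EE (m - k) Finset.univ w / EE m Finset.univ w := by
      rw [esymm_EE]; exact EE_inv k (by omega) w hw
    have h2 : esymm m (k - 1) (fun i => (w i)⁻¹)
        = EE (m - (k - 1)) Finset.univ w / EE m Finset.univ w := by
      rw [esymm_EE]; exact EE_inv (k - 1) (by omega) w hw
    have e2 : m - (k - 1) = l + 1 := by omega
    rw [h1, h2, e2, ← hl, div_div_div_comm, div_self hmw.ne', div_one]
  have gpos : ∀ w : Fin m → ℝ, (∀ i, 0 < w i) →
      0 < EE (l + 1) Finset.univ w / EE l Finset.univ w := fun w hw =>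
    div_pos (EE_pos (fun i _ => hw i) (hcard _ hlm))
      (EE_pos (fun i _ => hw i) (hcard _ (by omega)))
  constructor
  · -- convexity of the cone
    intro x hx y hy a b ha hb hab
    intro i
    have h1 : 0 ≤ a * x i := mul_nonneg ha (hx i).le
    have h2 : 0 ≤ b * y i := mul_nonneg hb (hy i).le
    have hor : 0 < a ∨ 0 < b := by
      by_contra h
      push_neg at h
      have ha0 : a = 0 := le_antisymm h.1 ha
      have hb0 : b = 0 := le_antisymm h.2 hb
      rw [ha0, hb0] at hab
      norm_num at hab
    show 0 < a * x i + b * y i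
    rcases hor with h | h
    · have := mul_pos h (hx i); linarith
    · have := mul_pos h (hy i); linarith
  · intro x hx y hy hxy a b ha hb hab
    have hx' : ∀ i, 0 < x i := hx
    have hy' : ∀ i, 0 < y i := hy
    set z : Fin m → ℝ := a • x + b • y with hzdef
    have hz' : ∀ i, 0 < z i := fun i => by
      have hzi : z i = a * x i + b * y i := rfl
      rw [hzi]
      have := mul_pos ha (hx' i)
      have := mul_pos hb (hy' i)
      linarith
    show a • (-(esymm m k (fun i => (x i)⁻¹) / esymm m (k - 1) (fun i => (x i)⁻¹)))
        + b • (-(esymm m k (fun i => (y i)⁻¹) / esymm m (k - 1) (fun i => (y i)⁻¹)))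
      < -(esymm m k (fun i => (z i)⁻¹) / esymm m (k - 1) (fun i => (z i)⁻¹))
    simp only [smul_eq_mul]
    rw [key x hx', key y hy', key z hz']
    have hAx : EE l Finset.univ x / EE (l + 1) Finset.univ x
        = 1 / (EE (l + 1) Finset.univ x / EE l Finset.univ x) := by rw [one_div, inv_div]
    have hAy : EE l Finset.univ y / EE (l + 1) Finset.univ y
        = 1 / (EE (l + 1) Finset.univ y / EE l Finset.univ y) := by rw [one_div, inv_div]
    have hAz : EE l Finset.univ z / EE (l + 1) Finset.univ z
        = 1 / (EE (l + 1) Finset.univ z / EE l Finset.univ z) := by rw [one_div, inv_div]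
    rw [hAx, hAy, hAz]
    set px := EE (l + 1) Finset.univ x / EE l Finset.univ x with hpxd
    set py := EE (l + 1) Finset.univ y / EE l Finset.univ y with hpyd
    set pz := EE (l + 1) Finset.univ z / EE l Finset.univ z with hpzd
    have hpx : 0 < px := gpos x hx'
    have hpy : 0 < py := gpos y hy'
    have hpz : 0 < pz := gpos z hz'
    have hax : ∀ i ∈ (Finset.univ : Finset (Fin m)), 0 < (a • x) i := fun i _ =>
      mul_pos ha (hx' i)
    have hby : ∀ i ∈ (Finset.univ : Finset (Fin m)), 0 < (b • y) i := fun i _ =>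
      mul_pos hb (hy' i)
    have hsuper : a * px + b * py ≤ pz := by
      have h := ML l Finset.univ (a • x) (b • y) hax hby (hcard _ hlm)
      rw [g_smul l hlm x hx' a ha, g_smul l hlm y hy' b hb] at h
      rw [hpxd, hpyd, hpzd, hzdef]
      exact h
    have hfin : 1 / pz < a / px + b / py := by
      by_cases hpq : px = py
      · -- equal values: use strict Marcus-Lopes
        have hnp : ¬ Par Finset.univ x y := by
          rintro ⟨c, hc, hpar⟩
          have hxy' : x = c • y := funext fun i => hpar i (Finset.mem_univ i)
          have hcp : px = c * py := by
            rw [hpxd, hxy', g_smul l hlm y hy' c hc, hpyd]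
          have hc1 : c = 1 := by
            rw [hpq] at hcp
            have h0 : (c - 1) * py = 0 := by linarith
            rcases mul_eq_zero.1 h0 with h | h
            · linarith
            · exact absurd h hpy.ne'
          exact hxy (by rw [hxy', hc1, one_smul])
        have hnp' : ¬ Par Finset.univ (a • x) (b • y) := by
          rintro ⟨c, hc, hpar⟩
          apply hnp
          refine ⟨c * b / a, by positivity, fun i hi => ?_⟩
          have h := hpar i hi
          have h' : a * x i = c * (b * y i) := h
          field_simp
          linarith [h']
        have hstrict : a * px + b * py < pz := by
          have h := MLs (l - 1) Finset.univ (a • x) (b • y) hax hby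
            (by rw [show l - 1 + 2 = l + 1 from by omega]; exact hcard _ hlm) hnp'
          rw [show l - 1 + 2 = l + 1 from by omega, show l - 1 + 1 = l from by omega] at h
          rw [g_smul l hlm x hx' a ha, g_smul l hlm y hy' b hb] at h
          rw [hpxd, hpyd, hpzd, hzdef]
          exact h
        have heq : a * px + b * py = px := by
          rw [← hpq]
          calc a * px + b * px = (a + b) * px := by ring
            _ = 1 * px := by rw [hab]
            _ = px := one_mul px
        calc 1 / pz < 1 / (a * px + b * py) := by
              apply one_div_lt_one_div_of_lt (by positivity) hstrict
          _ = 1 / px := by rw [heq]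
          _ = a / px + b / py := by rw [← hpq, ← add_div, hab]
      · calc 1 / pz ≤ 1 / (a * px + b * py) := by
              apply one_div_le_one_div_of_le (by positivity) hsuper
          _ < a / px + b / py := amhm_lt hpx hpy hpq ha hb hab
    have e1 : a / px = a * (1 / px) := by ring
    have e2 : b / py = b * (1 / py) := by ring
    rw [e1, e2] at hfin
    linarith
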